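/- For all integers k ≥ 0 and j with 0 ≤ j ≤ k, the following identity of rational numbers holds: (j!/k!) · Σ_{0 < t₁ < t₂ < ⋯ < t_{k−j} < k} t₁ t₂ ⋯ t_{k−j} = Σ_{i₁+⋯+i_j = k, i₁,…,i_j ≥ 1} 1/(i₁ i₂ ⋯ i_j). Here the left-hand sum ranges over all strictly increasing (k−j)-tuples of integers in {1,…,k−1} (and equals 1 when j = k), and the right-hand sum ranges over all ordered j-tuples of positive integers summing to k (so it equals 1 when j = k = 0, and 0 when j = 0 < k). -/

import Mathlib

open Finset

/-- The set of compositions of `k` into `j` positive parts. -/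
def Scomp (j k : ℕ) : Finset (Fin j → ℕ) :=
  (Finset.Nat.antidiagonalTuple j k).filter (fun g => ∀ i, 0 < g i)

lemma mem_Scomp {j k : ℕ} {g : Fin j → ℕ} :
    g ∈ Scomp j k ↔ (∑ i, g i) = k ∧ ∀ i, 0 < g i := by
  simp [Scomp, Finset.Nat.mem_antidiagonalTuple]

/-- The right-hand side sum. -/
noncomputable def Rc (j k : ℕ) : ℚ := ∑ g ∈ Scomp j k, (∏ i, (g i : ℚ))⁻¹

/-- The elementary symmetric sum appearing on the left. -/
noncomputable def Ee (k m : ℕ) : ℚ :=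
  ∑ s ∈ Finset.powersetCard m (Finset.Ioo 0 k), ∏ t ∈ s, (t : ℚ)

lemma Erec (k m : ℕ) (hk : 1 ≤ k) :
    Ee (k + 1) (m + 1) = Ee k (m + 1) + (k : ℚ) * Ee k m := by
  have hins : Finset.Ioo 0 (k + 1) = insert k (Finset.Ioo 0 k) := by
    ext x; simp only [Finset.mem_Ioo, Finset.mem_insert]; omega
  have hknm : k ∉ Finset.Ioo 0 k := by simp
  rw [Ee, hins, Finset.powersetCard_succ_insert hknm, Finset.sum_union, Finset.sum_image]
  · congr 1
    rw [Ee, Finset.mul_sum]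
    refine Finset.sum_congr rfl fun t ht => ?_
    have hkt : k ∉ t := fun hkt => hknm ((Finset.mem_powersetCard.mp ht).1 hkt)
    rw [Finset.prod_insert hkt]
  · intro a ha b hb hab
    have hka : k ∉ a := fun h => hknm ((Finset.mem_powersetCard.mp ha).1 h)
    have hkb : k ∉ b := fun h => hknm ((Finset.mem_powersetCard.mp hb).1 h)
    have : (insert k a).erase k = (insert k b).erase k := by rw [hab]
    rwa [Finset.erase_insert hka, Finset.erase_insert hkb] at this
  · rw [Finset.disjoint_left]
    intro a ha hb
    have hka : k ∉ a := fun h => hknm ((Finset.mem_powersetCard.mp ha).1 h)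
    obtain ⟨b, _, rfl⟩ := Finset.mem_image.mp hb
    exact hka (Finset.mem_insert_self k b)

lemma Rrec (j k : ℕ) :
    ((k : ℚ) + 1) * Rc (j + 1) (k + 1)
      = ((j : ℚ) + 1) * Rc j k + (k : ℚ) * Rc (j + 1) k := by
  have key : ∀ s : Fin (j + 1),
      ∑ g ∈ Scomp (j + 1) (k + 1), (g s : ℚ) * (∏ i, (g i : ℚ))⁻¹
        = Rc j k + ∑ g ∈ Scomp (j + 1) k, (g s : ℚ) * (∏ i, (g i : ℚ))⁻¹ := by
    intro s
    classical
    rw [← Finset.sum_filter_add_sum_filter_not (Scomp (j + 1) (k + 1)) (fun g => g s = 1)]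
    congr 1
    · -- the part with `g s = 1` is `Rc j k`, via removing the `s`-th coordinate
      rw [Rc]
      refine Finset.sum_bij' (fun g _ => Fin.removeNth s g)
        (fun g _ => Fin.insertNth s 1 g) ?_ ?_ ?_ ?_ ?_
      · intro g hg
        obtain ⟨hg, hgs⟩ := Finset.mem_filter.mp hg
        obtain ⟨hsum, hpos⟩ := mem_Scomp.mp hg
        rw [Fin.sum_univ_succAbove g s] at hsum
        refine mem_Scomp.mpr ⟨?_, fun i => hpos _⟩
        simp only [Fin.removeNth]
        omega
      · intro g hg
        obtain ⟨hsum, hpos⟩ := mem_Scomp.mp hg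
        refine Finset.mem_filter.mpr ⟨mem_Scomp.mpr ⟨?_, ?_⟩, ?_⟩
        · rw [Fin.sum_univ_succAbove _ s]
          simp only [Fin.insertNth_apply_same, Fin.insertNth_apply_succAbove, hsum]
          omega
        · intro i
          rcases eq_or_ne i s with rfl | hne
          · simp
          · obtain ⟨i', rfl⟩ := Fin.exists_succAbove_eq hne
            simpa using hpos i'
        · simp
      · intro g hg
        obtain ⟨_, hgs⟩ := Finset.mem_filter.mp hg
        have := Fin.insertNth_self_removeNth s g
        rwa [hgs] at this
      · intro g hg
        funext i
        simp [Fin.removeNth]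
      · intro g hg
        obtain ⟨hg', hgs⟩ := Finset.mem_filter.mp hg
        rw [Fin.prod_univ_succAbove (fun i => (g i : ℚ)) s, hgs]
        simp [Fin.removeNth]
    · -- the part with `g s ≠ 1` maps to `Scomp (j+1) k` by decreasing the `s`-th coordinate
      refine Finset.sum_bij' (fun g _ => Function.update g s (g s - 1))
        (fun g _ => Function.update g s (g s + 1)) ?_ ?_ ?_ ?_ ?_
      · intro g hg
        obtain ⟨hg, hgs⟩ := Finset.mem_filter.mp hg
        obtain ⟨hsum, hpos⟩ := mem_Scomp.mp hg
        have h2 : 2 ≤ g s := by have := hpos s; omega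
        refine mem_Scomp.mpr ⟨?_, ?_⟩
        · rw [Finset.sum_update_of_mem (Finset.mem_univ s),
            Finset.sdiff_singleton_eq_erase]
          rw [← Finset.add_sum_erase _ g (Finset.mem_univ s)] at hsum
          omega
        · intro i
          rcases eq_or_ne i s with rfl | hne
          · simp only [Function.update_self]; omega
          · rw [Function.update_of_ne hne]; exact hpos i
      · intro g hg
        obtain ⟨hsum, hpos⟩ := mem_Scomp.mp hg
        refine Finset.mem_filter.mpr ⟨mem_Scomp.mpr ⟨?_, ?_⟩, ?_⟩
        · rw [Finset.sum_update_of_mem (Finset.mem_univ s),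
            Finset.sdiff_singleton_eq_erase]
          rw [← Finset.add_sum_erase _ g (Finset.mem_univ s)] at hsum
          omega
        · intro i
          rcases eq_or_ne i s with rfl | hne
          · simp only [Function.update_self]; omega
          · rw [Function.update_of_ne hne]; exact hpos i
        · simp only [Function.update_self]
          have := hpos s; omega
      · intro g hg
        obtain ⟨hg, hgs⟩ := Finset.mem_filter.mp hg
        obtain ⟨_, hpos⟩ := mem_Scomp.mp hg
        have h1 : 1 ≤ g s := hpos s
        simp only [Function.update_idem, Function.update_self]
        have : g s - 1 + 1 = g s := by omega
        rw [this, Function.update_eq_self]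
      · intro g hg
        simp only [Function.update_idem, Function.update_self, Nat.add_sub_cancel]
        rw [Function.update_eq_self]
      · intro g hg
        obtain ⟨hg, hgs⟩ := Finset.mem_filter.mp hg
        obtain ⟨_, hpos⟩ := mem_Scomp.mp hg
        have h2 : 2 ≤ g s := by have := hpos s; omega
        have hP : ∀ (b : ℕ),
            ∏ i ∈ Finset.univ.erase s, ((Function.update g s b i : ℕ) : ℚ)
              = ∏ i ∈ Finset.univ.erase s, (g i : ℚ) := by
          intro b
          refine Finset.prod_congr rfl fun i hi => ?_
          rw [Function.update_of_ne (Finset.ne_of_mem_erase hi)]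
        rw [← Finset.mul_prod_erase Finset.univ (fun i => (g i : ℚ)) (Finset.mem_univ s),
          ← Finset.mul_prod_erase Finset.univ
            (fun i => ((Function.update g s (g s - 1) i : ℕ) : ℚ)) (Finset.mem_univ s),
          hP]
        simp only [Function.update_self]
        have ha : (g s : ℚ) ≠ 0 := by positivity
        have hb : ((g s - 1 : ℕ) : ℚ) ≠ 0 := Nat.cast_ne_zero.mpr (by omega)
        rw [mul_inv, mul_inv, ← mul_assoc, ← mul_assoc,
          mul_inv_cancel₀ ha, mul_inv_cancel₀ hb]
  -- now assemble
  have hL : ((k : ℚ) + 1) * Rc (j + 1) (k + 1)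
      = ∑ s : Fin (j + 1), ∑ g ∈ Scomp (j + 1) (k + 1),
          (g s : ℚ) * (∏ i, (g i : ℚ))⁻¹ := by
    rw [Finset.sum_comm, Rc, Finset.mul_sum]
    refine Finset.sum_congr rfl fun g hg => ?_
    have hsum := (mem_Scomp.mp hg).1
    rw [← Finset.sum_mul]
    congr 1
    have : ((∑ i, g i : ℕ) : ℚ) = (k : ℚ) + 1 := by rw [hsum]; push_cast; ring
    rw [← this]; push_cast; ring
  have hR : ∑ s : Fin (j + 1), ∑ g ∈ Scomp (j + 1) k, (g s : ℚ) * (∏ i, (g i : ℚ))⁻¹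
      = (k : ℚ) * Rc (j + 1) k := by
    rw [Finset.sum_comm, Rc, Finset.mul_sum]
    refine Finset.sum_congr rfl fun g hg => ?_
    have hsum := (mem_Scomp.mp hg).1
    rw [← Finset.sum_mul]
    congr 1
    have : ((∑ i, g i : ℕ) : ℚ) = (k : ℚ) := by rw [hsum]
    rw [← this]; push_cast; ring
  rw [hL]
  simp_rw [key]
  rw [Finset.sum_add_distrib, hR, Finset.sum_const, Finset.card_univ, Fintype.card_fin,
    nsmul_eq_mul]
  push_cast
  ring

lemma Scomp_self (j : ℕ) : Scomp j j = {fun _ => 1} := by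
  ext g
  simp only [Finset.mem_singleton, mem_Scomp]
  constructor
  · rintro ⟨hsum, hpos⟩
    funext i
    by_contra hne
    have h2 : 2 ≤ g i := by have := hpos i; omega
    have : g i + ∑ t ∈ Finset.univ.erase i, g t = j := by
      rw [Finset.add_sum_erase _ g (Finset.mem_univ i)]; exact hsum
    have hle : (Finset.univ.erase i).card • 1 ≤ ∑ t ∈ Finset.univ.erase i, g t :=
      Finset.card_nsmul_le_sum _ _ _ (fun t ht => hpos t)
    have hcard : (Finset.univ.erase i).card = j - 1 := by
      rw [Finset.card_erase_of_mem (Finset.mem_univ i), Finset.card_univ, Fintype.card_fin]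
    simp only [smul_eq_mul, mul_one] at hle
    have hj : 1 ≤ j := by
      rcases Nat.eq_zero_or_pos j with rfl | h
      · exact absurd i.2 (by omega)
      · exact h
    omega
  · rintro rfl
    refine ⟨by simp, fun i => one_pos⟩

/-- The combinatorial identity (3.17):
`(j!/k!) Σ_{0 < t₁ < ⋯ < t_{k−j} < k} t₁⋯t_{k−j} = Σ_{i₁+⋯+i_j = k, i_s ≥ 1} 1/(i₁⋯i_j)`. -/
theorem stmt5 (k j : ℕ) (hjk : j ≤ k) :
    (j.factorial : ℚ) / (k.factorial : ℚ) *
        ∑ s ∈ Finset.powersetCard (k - j) (Finset.Ioo 0 k), ∏ t ∈ s, (t : ℚ)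
      = ∑ g ∈ (Finset.Nat.antidiagonalTuple j k).filter (fun g => ∀ i, 0 < g i),
          (∏ i, (g i : ℚ))⁻¹ := by
  have main : ∀ k j : ℕ, j ≤ k →
      (j.factorial : ℚ) / (k.factorial : ℚ) * Ee k (k - j) = Rc j k := by
    intro k
    induction k with
    | zero =>
      intro j hj
      interval_cases j
      simp [Ee, Rc, Scomp, Finset.Nat.antidiagonalTuple_zero_zero]
    | succ k ih =>
      intro j hj
      rcases Nat.eq_zero_or_pos j with rfl | hj1
      · -- j = 0, k+1 > 0 : both sides are zero
        have h1 : Ee (k + 1) (k + 1 - 0) = 0 := by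
          rw [Ee]
          have : Finset.powersetCard (k + 1 - 0) (Finset.Ioo 0 (k + 1)) = ∅ := by
            rw [Finset.powersetCard_eq_empty]
            rw [Nat.card_Ioo]
            omega
          rw [this, Finset.sum_empty]
        have h2 : Rc 0 (k + 1) = 0 := by
          rw [Rc, Scomp, Finset.Nat.antidiagonalTuple_zero_succ]
          simp
        rw [h1, h2, mul_zero]
      · rcases Nat.lt_or_ge j (k + 1) with hjlt | hjge
        swap
        · -- j = k + 1
          have hjk1 : j = k + 1 := le_antisymm hj hjge
          subst hjk1
          rw [Nat.sub_self]
          have h1 : Ee (k + 1) 0 = 1 := by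
            rw [Ee, Finset.powersetCard_zero]
            simp
          have h2 : Rc (k + 1) (k + 1) = 1 := by
            rw [Rc, Scomp_self]
            simp
          rw [h1, h2, div_self (by exact_mod_cast (Nat.factorial_pos (k + 1)).ne'), one_mul]
        · -- 1 ≤ j ≤ k : use the recurrences
          obtain ⟨j', rfl⟩ : ∃ j', j = j' + 1 := ⟨j - 1, by omega⟩
          have hjk' : j' + 1 ≤ k := by omega
          have hE : Ee (k + 1) (k + 1 - (j' + 1)) = Ee k (k - j') + (k : ℚ) * Ee k (k - (j' + 1)) := by
            have h1 : k + 1 - (j' + 1) = (k - (j' + 1)) + 1 := by omega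
            have h2 : (k - (j' + 1)) + 1 = k - j' := by omega
            rw [h1, Erec k _ (by omega), h2]
          have ih1 := ih j' (by omega)
          have ih2 := ih (j' + 1) hjk'
          have hR := Rrec j' k
          have hk1 : ((k : ℚ) + 1) ≠ 0 := by positivity
          have hfk : ((k.factorial : ℚ)) ≠ 0 := by
            exact_mod_cast (Nat.factorial_pos k).ne'
          have hfj : (((j' + 1).factorial : ℚ)) ≠ 0 := by
            exact_mod_cast (Nat.factorial_pos (j' + 1)).ne'
          -- express goal
          have hfact1 : ((k + 1).factorial : ℚ) = ((k : ℚ) + 1) * (k.factorial : ℚ) := by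
            rw [Nat.factorial_succ]; push_cast; ring
          have hfact2 : (((j' + 1).factorial : ℚ)) = ((j' : ℚ) + 1) * (j'.factorial : ℚ) := by
            rw [Nat.factorial_succ]; push_cast; ring
          have goal : ((j' + 1).factorial : ℚ) / ((k + 1).factorial : ℚ)
              * Ee (k + 1) (k + 1 - (j' + 1)) = Rc (j' + 1) (k + 1) := by
            rw [hE, hfact1]
            have : Rc (j' + 1) (k + 1)
                = (((j' : ℚ) + 1) * Rc j' k + (k : ℚ) * Rc (j' + 1) k) / ((k : ℚ) + 1) := by
              rw [← hR]; field_simp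
            rw [this, ← ih1, ← ih2, hfact2]
            field_simp
          exact goal
  have := main k j hjk
  rw [Ee, Rc, Scomp] at this
  exact this
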